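/- arXiv:2011.06987 — 3 statements merged into one kernel-verified Lean document; each statement's English description precedes it below -/
import Mathlib

section
/- Let r ≥ 2 and ε ∈ (0, π]. Then for every φ ∈ [0, π], ∑_{ν ∈ ℤ, ν ≠ 0} (1 + |(φ + 2πν)/ε|^r)^{-1} ≤ 12 (1 + (φ/ε)^r)^{-1}. -/
open Real

/-- The lattice sum over nonzero `ν` is dominated by `12` times the `ν = 0` term. -/
theorem lattice_sum_bound (r : ℕ) (hr : 2 ≤ r) (ε : ℝ) (hε : ε ∈ Set.Ioc (0 : ℝ) π)
    (φ : ℝ) (hφ : φ ∈ Set.Icc (0 : ℝ) π) :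
    ∑' ν : {n : ℤ // n ≠ 0},
        (1 + |(φ + 2 * π * ((ν : ℤ) : ℝ)) / ε| ^ r)⁻¹ ≤
      12 * (1 + (φ / ε) ^ r)⁻¹ := by
  obtain ⟨hε0, hεπ⟩ := hε
  obtain ⟨hφ0, hφπ⟩ := hφ
  set x : ℝ := φ / ε with hx
  have hx0 : 0 ≤ x := div_nonneg hφ0 hε0.le
  set F : ℤ → ℝ := fun n => 2 * (((n : ℝ)) ^ 2)⁻¹ * (1 + x ^ r)⁻¹ with hF
  -- summability of the dominating series
  have hsq : Summable fun n : ℤ => 1 / (n : ℝ) ^ 2 :=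
    Real.summable_one_div_int_pow.mpr one_lt_two
  have hFsum : Summable F := by
    refine (hsq.mul_left (2 * (1 + x ^ r)⁻¹)).congr fun n => ?_
    simp [hF]; ring
  -- pointwise bound
  have key : ∀ ν : {n : ℤ // n ≠ 0},
      (1 + |(φ + 2 * π * ((ν : ℤ) : ℝ)) / ε| ^ r)⁻¹ ≤ F (ν : ℤ) := by
    rintro ⟨ν, hν⟩
    set M : ℝ := |(ν : ℝ)| with hM
    have hM1 : (1 : ℝ) ≤ M := by
      have : (1 : ℤ) ≤ |ν| := Int.one_le_abs hν
      have h' : ((1 : ℤ) : ℝ) ≤ ((|ν| : ℤ) : ℝ) := by exact_mod_cast this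
      simpa [hM, Int.cast_abs] using h'
    have habs : 2 * π * M - φ ≤ |φ + 2 * π * (ν : ℝ)| := by
      have h1 : |2 * π * (ν : ℝ)| - |(-φ)| ≤ |2 * π * (ν : ℝ) - (-φ)| :=
        abs_sub_abs_le_abs_sub _ _
      have h2 : |2 * π * (ν : ℝ)| = 2 * π * M := by
        rw [abs_mul, abs_of_nonneg (by positivity : (0:ℝ) ≤ 2 * π)]
      rw [h2, abs_neg, abs_of_nonneg hφ0, sub_neg_eq_add] at h1
      calc 2 * π * M - φ ≤ |2 * π * (ν : ℝ) + φ| := h1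
        _ = |φ + 2 * π * (ν : ℝ)| := by rw [add_comm]
    set t : ℝ := |(φ + 2 * π * (ν : ℝ)) / ε| with ht
    have ht_eq : t = |φ + 2 * π * (ν : ℝ)| / ε := by
      rw [ht, abs_div, abs_of_pos hε0]
    have hA : M ≤ t := by
      rw [ht_eq, le_div_iff₀ hε0]
      nlinarith [pi_pos, habs]
    have hnumB : φ * M ≤ |φ + 2 * π * (ν : ℝ)| := by
      nlinarith [habs, mul_nonneg (sub_nonneg.mpr hφπ) (le_trans zero_le_one hM1),
        mul_nonneg hφ0 (sub_nonneg.mpr hM1)]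
    have hB : x * M ≤ t := by
      rw [ht_eq, hx, div_mul_eq_mul_div]
      gcongr
    have ht0 : 0 ≤ t := abs_nonneg _
    have htM : M ^ r ≤ t ^ r := pow_le_pow_left₀ (by linarith) hA r
    have hxM : x ^ r * M ^ r ≤ t ^ r := by
      rw [← mul_pow]; exact pow_le_pow_left₀ (by positivity) hB r
    have hM2r : M ^ 2 ≤ M ^ r := pow_le_pow_right₀ hM1 hr
    have hxr0 : (0 : ℝ) ≤ x ^ r := by positivity
    have hmain : M ^ 2 * (1 + x ^ r) ≤ 2 * (1 + t ^ r) := by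
      nlinarith [htM, hxM, hM2r, hxr0, mul_le_mul_of_nonneg_left hM2r hxr0]
    have h1 : (0 : ℝ) < 1 + t ^ r := by positivity
    have h2 : (0 : ℝ) < M ^ 2 * (1 + x ^ r) := by positivity
    have hstep : (1 + t ^ r)⁻¹ ≤ 2 / (M ^ 2 * (1 + x ^ r)) := by
      rw [inv_eq_one_div, div_le_div_iff₀ h1 h2]
      nlinarith [hmain]
    have hMsq : ((ν : ℝ)) ^ 2 = M ^ 2 := (sq_abs _).symm
    calc (1 + t ^ r)⁻¹ ≤ 2 / (M ^ 2 * (1 + x ^ r)) := hstep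
      _ = 2 * (((ν : ℝ)) ^ 2)⁻¹ * (1 + x ^ r)⁻¹ := by
          rw [hMsq, div_eq_mul_inv, mul_inv]; ring
  have hFsub : Summable fun ν : {n : ℤ // n ≠ 0} => F (ν : ℤ) := hFsum.subtype _
  have hf : Summable fun ν : {n : ℤ // n ≠ 0} =>
      (1 + |(φ + 2 * π * ((ν : ℤ) : ℝ)) / ε| ^ r)⁻¹ :=
    Summable.of_nonneg_of_le (fun ν => by positivity) key hFsub
  have hFnonneg : ∀ n : ℤ, 0 ≤ F n := fun n => by positivity
  -- evaluate the dominating sum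
  have hnat : Summable fun n : ℕ => ((n : ℝ) ^ 2)⁻¹ := by
    refine hasSum_zeta_two.summable.congr fun n => ?_
    rw [one_div]
  have htsum_nat : ∑' n : ℕ, ((n : ℝ) ^ 2)⁻¹ = π ^ 2 / 6 := by
    rw [← hasSum_zeta_two.tsum_eq]
    exact tsum_congr fun n => by rw [one_div]
  have hnat' : Summable fun n : ℕ => (((n : ℝ) + 1) ^ 2)⁻¹ := by
    refine (summable_nat_add_iff 1).mpr hnat |>.congr fun n => ?_
    push_cast; ring_nf
  have htsum_nat' : ∑' n : ℕ, (((n : ℝ) + 1) ^ 2)⁻¹ = π ^ 2 / 6 := by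
    have h0 := Summable.tsum_eq_zero_add hnat
    rw [htsum_nat] at h0
    have hz : ((0 : ℕ) : ℝ) ^ 2 = 0 := by norm_num
    rw [hz, inv_zero, zero_add] at h0
    rw [h0]
    exact tsum_congr fun n => by push_cast; ring_nf
  have hZ1 : Summable fun n : ℕ => (((((n : ℤ)) : ℝ)) ^ 2)⁻¹ := by
    exact hnat.congr fun n => by push_cast; ring
  have hZ2 : Summable fun n : ℕ => (((((-((n : ℤ) + 1)) : ℤ) : ℝ)) ^ 2)⁻¹ := by
    refine hnat'.congr fun n => ?_
    push_cast; ring_nf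
  have hint : ∑' n : ℤ, (((n : ℝ)) ^ 2)⁻¹ ≤ π ^ 2 / 3 := by
    have hsplit : ∑' n : ℤ, (((n : ℝ)) ^ 2)⁻¹
        = (∑' n : ℕ, (((((n : ℤ)) : ℝ)) ^ 2)⁻¹)
          + ∑' n : ℕ, (((((-((n : ℤ) + 1)) : ℤ) : ℝ)) ^ 2)⁻¹ :=
      tsum_of_nat_of_neg_add_one hZ1 hZ2
    rw [hsplit]
    have e1 : ∑' n : ℕ, (((((n : ℤ)) : ℝ)) ^ 2)⁻¹ = π ^ 2 / 6 := by
      rw [← htsum_nat]; exact tsum_congr fun n => by push_cast; ring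
    have e2 : ∑' n : ℕ, (((((-((n : ℤ) + 1)) : ℤ) : ℝ)) ^ 2)⁻¹ = π ^ 2 / 6 := by
      rw [← htsum_nat']; exact tsum_congr fun n => by push_cast; ring_nf
    rw [e1, e2]; ring_nf; linarith [pi_pos]
  have hFtsum : ∑' n : ℤ, F n = 2 * (1 + x ^ r)⁻¹ * ∑' n : ℤ, (((n : ℝ)) ^ 2)⁻¹ := by
    rw [← tsum_mul_left]
    exact tsum_congr fun n => by simp [hF]; ring
  have hinv0 : (0 : ℝ) ≤ (1 + x ^ r)⁻¹ := by positivity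
  calc ∑' ν : {n : ℤ // n ≠ 0}, (1 + |(φ + 2 * π * ((ν : ℤ) : ℝ)) / ε| ^ r)⁻¹
      ≤ ∑' ν : {n : ℤ // n ≠ 0}, F (ν : ℤ) := Summable.tsum_le_tsum key hf hFsub
    _ ≤ ∑' n : ℤ, F n := Summable.tsum_subtype_le F {n : ℤ | n ≠ 0} hFnonneg hFsum
    _ = 2 * (1 + x ^ r)⁻¹ * ∑' n : ℤ, (((n : ℝ)) ^ 2)⁻¹ := hFtsum
    _ ≤ 2 * (1 + x ^ r)⁻¹ * (π ^ 2 / 3) := by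
        exact mul_le_mul_of_nonneg_left hint (by positivity)
    _ ≤ 12 * (1 + x ^ r)⁻¹ := by
        have hpi2 : π ^ 2 ≤ 16 := by nlinarith [pi_le_four, pi_pos]
        have hh := mul_le_mul_of_nonneg_left hpi2 hinv0
        nlinarith [hinv0, hh]
end

section
/- Let r ∈ ℕ, β > 0, c > 0, and let (A_ℓ)_{ℓ≥0} be a nonnegative sequence such that the r-th forward differences Δ_ℓ^r of (√A_ℓ) satisfy |Δ_ℓ^r| ≤ c (1+ℓ)^{-(1+β+r)} for all ℓ ≥ 0, and √A_ℓ → 0 as ℓ → ∞. Then for each i = 0,…,r there exists C_i > 0 such that |Δ_ℓ^i| ≤ C_i (1+ℓ)^{-(1+β+i)} for all ℓ ≥ 0. -/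
open Real Filter Finset

lemma aux_key (s x : ℝ) (hs : 1 ≤ s) (hx : 1 ≤ x) :
    (x+1) ^ (-(s+1)) ≤ (1/s) * (x ^ (-s) - (x+1) ^ (-s)) := by
  have hx0 : (0:ℝ) < x := by linarith
  have hx1 : (0:ℝ) < x + 1 := by linarith
  have hs0 : (0:ℝ) < s := by linarith
  have h1x : (0:ℝ) ≤ 1/x := by positivity
  have hm1 : (-1:ℝ) ≤ 1/x := by linarith
  have hb : 1 + s * (1/x) ≤ (1 + 1/x) ^ s :=
    one_add_mul_self_le_rpow_one_add hm1 hs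
  have h1 : (1 + 1/x) ^ s = (x+1) ^ s / x ^ s := by
    rw [show (1:ℝ) + 1/x = (x+1)/x by field_simp, Real.div_rpow hx1.le hx0.le]
  rw [h1] at hb
  set a := x ^ s with ha
  set b := (x+1) ^ s with hbdef
  have hap : (0:ℝ) < a := Real.rpow_pos_of_pos hx0 s
  have hbp : (0:ℝ) < b := Real.rpow_pos_of_pos hx1 s
  have hba : s * a ≤ (b - a) * x := by
    have h := mul_le_mul_of_nonneg_left hb (mul_pos hap hx0).le
    have e4 : a * x * (1 + s * (1/x)) = a * x + s * a := by field_simp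
    have e5 : a * x * (b / a) = b * x := by field_simp
    rw [e4, e5] at h
    nlinarith
  have e1 : (x+1) ^ (-(s+1)) = (b * (x+1))⁻¹ := by
    rw [Real.rpow_neg hx1.le, Real.rpow_add_one hx1.ne']
  have e2 : x ^ (-s) = a⁻¹ := Real.rpow_neg hx0.le s
  have e3 : (x+1) ^ (-s) = b⁻¹ := Real.rpow_neg hx1.le s
  have hba2 : (0:ℝ) < b - a := by nlinarith
  rw [e1, e2, e3, div_mul_eq_mul_div, one_mul, le_div_iff₀ hs0,
    inv_sub_inv hap.ne' hbp.ne', inv_mul_eq_div,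
    div_le_div_iff₀ (by positivity) (by positivity)]
  nlinarith [mul_le_mul_of_nonneg_right hba hbp.le, mul_pos hba2 hbp]

/-- Tail sum partial bound. -/
lemma aux_sum (s : ℝ) (hs : 1 ≤ s) (ℓ N : ℕ) :
    ∑ m ∈ range N, (1 + ((ℓ + m : ℕ) : ℝ)) ^ (-(s+1)) ≤
      (1 + (ℓ:ℝ)) ^ (-(s+1)) + (1/s) * (1 + (ℓ:ℝ)) ^ (-s) := by
  have hs0 : (0:ℝ) < s := by linarith
  have hpos : ∀ k : ℕ, (0:ℝ) < 1 + (k:ℝ) := fun k => by positivity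
  cases N with
  | zero =>
    simp only [Finset.range_zero, Finset.sum_empty]
    have t1 : (0:ℝ) ≤ (1 + (ℓ:ℝ)) ^ (-(s+1)) := Real.rpow_nonneg (by positivity) _
    have t2 : (0:ℝ) ≤ (1 + (ℓ:ℝ)) ^ (-s) := Real.rpow_nonneg (by positivity) _
    have t3 : (0:ℝ) ≤ 1/s := by positivity
    nlinarith
  | succ K =>
    rw [Finset.sum_range_succ']
    have h0 : (1 + ((ℓ + 0 : ℕ) : ℝ)) ^ (-(s+1)) = (1 + (ℓ:ℝ)) ^ (-(s+1)) := by norm_num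
    rw [h0]
    have key : ∀ m : ℕ, (1 + ((ℓ + (m+1) : ℕ) : ℝ)) ^ (-(s+1)) ≤
        (1/s) * ((1 + ((ℓ+m:ℕ):ℝ)) ^ (-s) - (1 + ((ℓ+(m+1):ℕ):ℝ)) ^ (-s)) := by
      intro m
      have e : (1 + ((ℓ + (m+1) : ℕ) : ℝ)) = (1 + ((ℓ+m:ℕ):ℝ)) + 1 := by push_cast; ring
      rw [e]
      have hn : (0:ℝ) ≤ ((ℓ+m:ℕ):ℝ) := Nat.cast_nonneg _
      exact aux_key s _ hs (by linarith)
    have hsum : ∑ m ∈ range K, (1 + ((ℓ + (m+1) : ℕ) : ℝ)) ^ (-(s+1)) ≤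
        (1/s) * (1 + (ℓ:ℝ)) ^ (-s) := by
      calc ∑ m ∈ range K, (1 + ((ℓ + (m+1) : ℕ) : ℝ)) ^ (-(s+1))
          ≤ ∑ m ∈ range K, (1/s) * ((1 + ((ℓ+m:ℕ):ℝ)) ^ (-s) - (1 + ((ℓ+(m+1):ℕ):ℝ)) ^ (-s)) :=
            Finset.sum_le_sum fun m _ => key m
        _ = (1/s) * ∑ m ∈ range K, ((fun j => (1 + ((ℓ+j:ℕ):ℝ)) ^ (-s)) m
              - (fun j => (1 + ((ℓ+j:ℕ):ℝ)) ^ (-s)) (m+1)) := by rw [Finset.mul_sum]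
        _ = (1/s) * ((1 + ((ℓ+0:ℕ):ℝ)) ^ (-s) - (1 + ((ℓ+K:ℕ):ℝ)) ^ (-s)) := by
              rw [Finset.sum_range_sub']
        _ ≤ (1/s) * (1 + (ℓ:ℝ)) ^ (-s) := by
              have h1 : (0:ℝ) ≤ (1 + ((ℓ+K:ℕ):ℝ)) ^ (-s) := Real.rpow_nonneg (hpos _).le _
              have h2 : ((ℓ+0:ℕ):ℝ) = (ℓ:ℝ) := by norm_num
              rw [h2]
              have h3 : (0:ℝ) ≤ (1 + (ℓ:ℝ)) ^ (-s) := Real.rpow_nonneg (hpos ℓ).le _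
              have h4 : (0:ℝ) < 1/s := by positivity
              nlinarith [mul_nonneg h4.le h1]
    linarith

/-- The key descending step. -/
lemma aux_step (s C : ℝ) (hs : 1 ≤ s) (hC : 0 < C) (f : ℕ → ℝ)
    (hlim : Tendsto f atTop (nhds 0))
    (hd : ∀ ℓ : ℕ, |f (ℓ+1) - f ℓ| ≤ C * (1 + (ℓ:ℝ)) ^ (-(s+1))) :
    ∀ ℓ : ℕ, |f ℓ| ≤ (C * (1 + 1/s)) * (1 + (ℓ:ℝ)) ^ (-s) := by
  intro ℓ
  have hs0 : (0:ℝ) < s := by linarith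
  set g : ℕ → ℝ := fun m => f (ℓ + m + 1) - f (ℓ + m) with hg
  set h : ℕ → ℝ := fun m => C * (1 + ((ℓ + m : ℕ) : ℝ)) ^ (-(s+1)) with hh
  have hhn : ∀ m, 0 ≤ h m := fun m => by positivity
  have hgh : ∀ m, |g m| ≤ h m := fun m => by
    simpa [hg, hh, add_assoc] using hd (ℓ + m)
  have hbnd : ∀ n, ∑ m ∈ range n, h m ≤
      C * ((1 + (ℓ:ℝ)) ^ (-(s+1)) + (1/s) * (1 + (ℓ:ℝ)) ^ (-s)) := by
    intro n
    rw [hh, ← Finset.mul_sum]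
    exact mul_le_mul_of_nonneg_left (aux_sum s hs ℓ n) hC.le
  have hhsum : Summable h := summable_of_sum_range_le hhn hbnd
  have hgabs : Summable (fun m => |g m|) :=
    hhsum.of_nonneg_of_le (fun m => abs_nonneg _) hgh
  have hgsum : Summable g := hgabs.of_abs
  have htel : ∀ N, ∑ m ∈ range N, g m = f (ℓ + N) - f ℓ := by
    intro N
    have := Finset.sum_range_sub (fun m => f (ℓ + m)) N
    simpa [hg, add_assoc] using this
  have hfl : Tendsto (fun N => f (ℓ + N)) atTop (nhds 0) := by
    have := hlim.comp (tendsto_add_atTop_nat ℓ)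
    simpa [Function.comp_def, add_comm] using this
  have hto : Tendsto (fun N => ∑ m ∈ range N, g m) atTop (nhds (0 - f ℓ)) := by
    simp only [htel]
    exact hfl.sub_const _
  have hsum_eq : ∑' m, g m = 0 - f ℓ :=
    tendsto_nhds_unique hgsum.hasSum.tendsto_sum_nat hto
  have h1 : |f ℓ| = |∑' m, g m| := by rw [hsum_eq]; simp
  have h2 : |∑' m, g m| ≤ ∑' m, |g m| := by
    simpa [Real.norm_eq_abs] using
      norm_tsum_le_tsum_norm (f := g) (by simpa [Real.norm_eq_abs] using hgabs)
  have h3 : ∑' m, |g m| ≤ ∑' m, h m := Summable.tsum_le_tsum hgh hgabs hhsum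
  have h4 : ∑' m, h m ≤ C * ((1 + (ℓ:ℝ)) ^ (-(s+1)) + (1/s) * (1 + (ℓ:ℝ)) ^ (-s)) :=
    Summable.tsum_le_of_sum_range_le hhsum hbnd
  have h5 : (1 + (ℓ:ℝ)) ^ (-(s+1)) ≤ (1 + (ℓ:ℝ)) ^ (-s) := by
    apply Real.rpow_le_rpow_of_exponent_le
    · linarith [Nat.cast_nonneg (α := ℝ) ℓ]
    · linarith
  have h6 : C * ((1 + (ℓ:ℝ)) ^ (-(s+1)) + (1/s) * (1 + (ℓ:ℝ)) ^ (-s)) ≤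
      (C * (1 + 1/s)) * (1 + (ℓ:ℝ)) ^ (-s) := by nlinarith
  linarith

/-- Forward differences of a sequence. -/
def fwdDiffSeq (f : ℕ → ℝ) : ℕ → ℕ → ℝ
  | 0 => f
  | (i + 1) => fun ℓ => fwdDiffSeq f i (ℓ + 1) - fwdDiffSeq f i ℓ

lemma aux_tendsto (f : ℕ → ℝ) (hlim : Tendsto f atTop (nhds 0)) :
    ∀ i, Tendsto (fwdDiffSeq f i) atTop (nhds 0) := by
  intro i
  induction i with
  | zero => simpa [fwdDiffSeq] using hlim
  | succ i ih =>
    have h1 : Tendsto (fun ℓ => fwdDiffSeq f i (ℓ+1)) atTop (nhds 0) := by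
      have := ih.comp (tendsto_add_atTop_nat 1)
      simpa [Function.comp_def] using this
    have := h1.sub ih
    simpa [fwdDiffSeq] using this

/-- Decay of lower-order forward differences of `√A_ℓ` from decay of the
`r`-th differences. -/
theorem fwdDiffSeq_decay (r : ℕ) (β c : ℝ) (hβ : 0 < β) (hc : 0 < c)
    (A : ℕ → ℝ) (hA : ∀ ℓ, 0 ≤ A ℓ)
    (hlim : Tendsto (fun ℓ => Real.sqrt (A ℓ)) atTop (nhds 0))
    (hr : ∀ ℓ : ℕ, |fwdDiffSeq (fun ℓ => Real.sqrt (A ℓ)) r ℓ| ≤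
      c * (1 + (ℓ : ℝ)) ^ (-(1 + β + (r : ℝ)))) :
    ∀ i ≤ r, ∃ C > 0, ∀ ℓ : ℕ,
      |fwdDiffSeq (fun ℓ => Real.sqrt (A ℓ)) i ℓ| ≤
        C * (1 + (ℓ : ℝ)) ^ (-(1 + β + (i : ℝ))) := by
  set f : ℕ → ℝ := fun ℓ => Real.sqrt (A ℓ) with hf
  have key : ∀ d : ℕ, ∀ i : ℕ, i + d = r → ∃ C > 0, ∀ ℓ : ℕ,
      |fwdDiffSeq f i ℓ| ≤ C * (1 + (ℓ : ℝ)) ^ (-(1 + β + (i : ℝ))) := by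
    intro d
    induction d with
    | zero =>
      intro i hi
      have : i = r := by omega
      subst this
      exact ⟨c, hc, hr⟩
    | succ d ih =>
      intro i hi
      obtain ⟨C, hCpos, hC⟩ := ih (i+1) (by omega)
      set s : ℝ := 1 + β + (i:ℝ) with hsdef
      have hs : 1 ≤ s := by
        have := Nat.cast_nonneg (α := ℝ) i
        simp only [hsdef]; linarith
      have hs0 : (0:ℝ) < s := by linarith
      have hd' : ∀ ℓ : ℕ, |fwdDiffSeq f i (ℓ+1) - fwdDiffSeq f i ℓ| ≤
          C * (1 + (ℓ:ℝ)) ^ (-(s+1)) := by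
        intro ℓ
        have e : (-(1 + β + ((i+1:ℕ):ℝ))) = -(s+1) := by push_cast; simp [hsdef]; ring
        have := hC ℓ
        rw [e] at this
        simpa [fwdDiffSeq] using this
      refine ⟨C * (1 + 1/s), mul_pos hCpos (by have := one_div_pos.mpr hs0; linarith), ?_⟩
      exact aux_step s C hs hCpos _ (aux_tendsto f hlim i) hd'
  intro i hi
  exact key (r - i) i (by omega)
end

section
/- For every ℓ ∈ ℕ and θ ∈ (0, π), the Legendre polynomial satisfies the Mehler–Dirichlet formula P_ℓ(cos θ) = (√2/π) ∫_θ^π sin((ℓ + 1/2)φ)/√(cos θ − cos φ) dφ. -/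
open Real Set

/-- The `ℓ`-th Legendre polynomial via Rodrigues' formula. -/
noncomputable def legendreP (ℓ : ℕ) (x : ℝ) : ℝ :=
  ((2 : ℝ) ^ ℓ * (Nat.factorial ℓ : ℝ))⁻¹ *
    iteratedDeriv ℓ (fun t : ℝ => (t ^ 2 - 1) ^ ℓ) x


open Polynomial MeasureTheory

noncomputable def legQ (n : ℕ) : Polynomial ℝ := derivative^[n] ((X^2 - 1)^n)

lemma iter_deriv_X_mul (n : ℕ) (p : Polynomial ℝ) :
    derivative^[n+1] (X * p) =
      X * derivative^[n+1] p + ((n:Polynomial ℝ)+1) * derivative^[n] p := by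
  induction n with
  | zero => simp [derivative_mul]; ring
  | succ n ih =>
      rw [Function.iterate_succ_apply' derivative (n+1) (X*p), ih]
      simp only [derivative_mul, derivative_natCast, derivative_X, derivative_add,
        derivative_one, map_ofNat]
      simp only [← Function.iterate_succ_apply' derivative, ← Function.iterate_succ_apply derivative]
      push_cast
      ring

lemma iter_deriv_q_mul (n : ℕ) (p : Polynomial ℝ) :
    derivative^[n+2] ((X^2 - 1) * p) =
      (X^2 - 1) * derivative^[n+2] p
        + 2*((n:Polynomial ℝ)+2) * X * derivative^[n+1] p
        + ((n:Polynomial ℝ)+2)*((n:Polynomial ℝ)+1) * derivative^[n] p := by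
  induction n with
  | zero =>
      show derivative (derivative _) = _
      simp [derivative_mul, derivative_pow, map_ofNat]
      ring
  | succ n ih =>
      rw [Function.iterate_succ_apply' derivative (n+2) ((X^2-1)*p), ih]
      have h1 : derivative (derivative^[n] p) = derivative^[n+1] p :=
        (Function.iterate_succ_apply' derivative n p).symm
      have h2 : derivative (derivative^[n+1] p) = derivative^[n+2] p :=
        (Function.iterate_succ_apply' derivative (n+1) p).symm
      have h3 : derivative (derivative^[n+2] p) = derivative^[n+3] p :=
        (Function.iterate_succ_apply' derivative (n+2) p).symm
      have hC : (C (2:ℝ)) = 2 := map_ofNat C 2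
      have e1 : n+1+2 = n+3 := rfl
      have e2 : n+1+1 = n+2 := rfl
      simp only [derivative_mul, derivative_natCast, derivative_X, derivative_add,
        derivative_sub, derivative_one, derivative_pow, derivative_ofNat, hC, C_eq_natCast, Nat.cast_ofNat, h1, h2, h3, e1, e2]
      push_cast
      ring

lemma iter_deriv_const_mul (c : Polynomial ℝ) (hc : derivative c = 0) (n : ℕ) (p : Polynomial ℝ) :
    derivative^[n] (c * p) = c * derivative^[n] p := by
  induction n with
  | zero => rfl
  | succ n ih =>
      rw [Function.iterate_succ_apply' derivative n (c * p), ih, derivative_mul,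
        hc, zero_mul, zero_add, Function.iterate_succ_apply' derivative n p]

lemma deriv_natC (q : Polynomial ℝ) (m : ℕ) : derivative (2*((m:Polynomial ℝ)+1)) = 0 := by
  simp

lemma deriv_u (m : ℕ) : derivative (((X:Polynomial ℝ)^2 - 1)^(m+1))
    = (2*((m:Polynomial ℝ)+1)) * (X * ((X:Polynomial ℝ)^2-1)^m) := by
  rw [derivative_pow]
  simp [C_eq_natCast, map_ofNat]
  push_cast
  ring

lemma legQ_zero : legQ 0 = 1 := by simp [legQ]

lemma legQ_one : legQ 1 = 2*X := by
  show derivative _ = _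
  rw [pow_one, derivative_sub, derivative_one, derivative_pow]
  simp [C_eq_natCast, map_ofNat]

lemma legQ_three (m : ℕ) :
    (X^2-1) * derivative (legQ (m+2)) =
      ((m:Polynomial ℝ)+2)*((m:Polynomial ℝ)+3)
        * derivative^[m+1] (((X:Polynomial ℝ)^2-1)^(m+2)) := by
  set u : Polynomial ℝ := ((X:Polynomial ℝ)^2-1)^(m+2) with hu
  have hODE : (X^2-1) * derivative u = (2*((m:Polynomial ℝ)+2)) * (X * u) := by
    rw [hu, deriv_u (m+1)]
    push_cast
    ring
  have h := congrArg (derivative^[m+2]) hODE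
  rw [iter_deriv_q_mul m (derivative u),
    iter_deriv_const_mul _ (by simp) (m+2) (X*u), iter_deriv_X_mul (m+1) u] at h
  have c1 : derivative^[m+2] (derivative u) = derivative^[m+3] u :=
    (Function.iterate_succ_apply derivative (m+2) u).symm
  have c2 : derivative^[m+1] (derivative u) = derivative^[m+2] u :=
    (Function.iterate_succ_apply derivative (m+1) u).symm
  have c3 : derivative^[m] (derivative u) = derivative^[m+1] u :=
    (Function.iterate_succ_apply derivative m u).symm
  have c4 : derivative^[m+1+1] u = derivative^[m+2] u := rfl
  rw [c1, c2, c3, c4] at h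
  have hdQ : derivative (legQ (m+2)) = derivative^[m+3] u := by
    show derivative (derivative^[m+2] u) = _
    rw [← Function.iterate_succ_apply' derivative (m+2) u]
  rw [hdQ]
  push_cast at h ⊢
  linear_combination h

lemma legQ_four (m : ℕ) :
    legQ (m+2) = 2*((m:Polynomial ℝ)+2) * (X * legQ (m+1))
      + 2*((X^2-1) * derivative (legQ (m+1))) := by
  cases m with
  | zero =>
      have h1 : legQ 1 = 2*X := legQ_one
      have h2 : legQ 2 = 12*X^2 - 4 := by
        show derivative (derivative _) = _
        have e : ((X:Polynomial ℝ)^2-1)^2 = X^4 - 2*X^2 + 1 := by ring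
        rw [e]
        simp [derivative_pow, C_eq_natCast, map_ofNat]
        ring
      rw [h1, h2]
      simp [derivative_mul]
      ring
  | succ m =>
      show legQ (m+3) = 2*((((m:ℕ)+1:ℕ):Polynomial ℝ)+2) * (X * legQ (m+2))
        + 2*((X^2-1) * derivative (legQ (m+2)))
      set u : Polynomial ℝ := ((X:Polynomial ℝ)^2-1)^(m+2) with hu
      have e1 : legQ (m+3) = derivative^[m+2] (derivative (((X:Polynomial ℝ)^2-1)^(m+3))) := by
        show derivative^[m+3] _ = _
        rw [Function.iterate_succ_apply derivative (m+2)]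
      rw [show ((X:Polynomial ℝ)^2-1)^(m+3) = ((X:Polynomial ℝ)^2-1)^(m+2+1) from rfl,
        deriv_u (m+2)] at e1
      rw [iter_deriv_const_mul _ (by simp) (m+2) (X*u), iter_deriv_X_mul (m+1) u] at e1
      have c4 : derivative^[m+1+1] u = legQ (m+2) := rfl
      rw [c4] at e1
      have h3 := legQ_three m
      push_cast at e1 h3 ⊢
      linear_combination e1 - 2*h3

lemma legQ_five (ℓ : ℕ) :
    derivative (legQ (ℓ+1)) = 2*((ℓ:Polynomial ℝ)+1) * (X * derivative (legQ ℓ))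
      + 2*((ℓ:Polynomial ℝ)+1)*((ℓ:Polynomial ℝ)+1) * legQ ℓ := by
  set u : Polynomial ℝ := ((X:Polynomial ℝ)^2-1)^ℓ with hu
  have e1 : derivative (legQ (ℓ+1)) = derivative^[ℓ+1] (derivative (((X:Polynomial ℝ)^2-1)^(ℓ+1))) := by
    show derivative (derivative^[ℓ+1] _) = _
    rw [← Function.iterate_succ_apply' derivative (ℓ+1), Function.iterate_succ_apply derivative (ℓ+1)]
  rw [deriv_u ℓ, iter_deriv_const_mul _ (by simp) (ℓ+1) (X*u), iter_deriv_X_mul ℓ u] at e1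
  have c2 : derivative^[ℓ+1] u = derivative (legQ ℓ) := Function.iterate_succ_apply' derivative ℓ u
  have c3 : derivative^[ℓ] u = legQ ℓ := rfl
  rw [c2, c3] at e1
  push_cast at e1 ⊢
  linear_combination e1

lemma legQ_six (m : ℕ) :
    (X^2-1) * derivative (legQ (m+1)) =
      ((m:Polynomial ℝ)+1) * (X * legQ (m+1))
        - 2*((m:Polynomial ℝ)+1)*((m:Polynomial ℝ)+1) * legQ m := by
  cases m with
  | zero =>
      rw [legQ_zero, legQ_one]
      simp [derivative_mul]
      ring
  | succ m =>
      show (X^2-1) * derivative (legQ (m+2)) =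
        ((((m:ℕ)+1:ℕ):Polynomial ℝ)+1) * (X * legQ (m+2))
          - 2*((((m:ℕ)+1:ℕ):Polynomial ℝ)+1)*((((m:ℕ)+1:ℕ):Polynomial ℝ)+1) * legQ (m+1)
      have h4 := legQ_four m
      have h5 := legQ_five (m+1)
      push_cast at h4 h5 ⊢
      linear_combination (X^2-1)*h5 - (((m:Polynomial ℝ))+2)*X*h4

lemma legQ_bonnet (m : ℕ) :
    legQ (m+2) = (4*(m:Polynomial ℝ)+6)*(X*legQ (m+1))
      - 4*((m:Polynomial ℝ)+1)^2 * legQ m := by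
  have h4 := legQ_four m
  have h6 := legQ_six m
  linear_combination h4 + 2*h6

lemma iteratedDeriv_polyeval (n : ℕ) (p : Polynomial ℝ) :
    iteratedDeriv n (fun t : ℝ => p.eval t) = fun x => (derivative^[n] p).eval x := by
  induction n with
  | zero => simp [iteratedDeriv_zero]
  | succ n ih =>
      rw [iteratedDeriv_succ, ih]
      funext x
      rw [Function.iterate_succ_apply' derivative n p]
      exact Polynomial.deriv _

lemma legendreP_eq (ℓ : ℕ) (x : ℝ) :
    legendreP ℓ x = ((2:ℝ)^ℓ * (Nat.factorial ℓ : ℝ))⁻¹ * (legQ ℓ).eval x := by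
  unfold legendreP legQ
  congr 1
  have : (fun t : ℝ => (t^2-1)^ℓ) = (fun t : ℝ => (((X:Polynomial ℝ)^2-1)^ℓ).eval t) := by
    funext t; simp
  rw [this, iteratedDeriv_polyeval]

lemma legendreP_zero (x : ℝ) : legendreP 0 x = 1 := by
  rw [legendreP_eq, legQ_zero]; simp

lemma legendreP_one (x : ℝ) : legendreP 1 x = x := by
  rw [legendreP_eq, legQ_one]
  simp [Nat.factorial]

lemma legendreP_bonnet (m : ℕ) (x : ℝ) :
    ((m:ℝ)+2) * legendreP (m+2) x =
      (2*(m:ℝ)+3) * x * legendreP (m+1) x - ((m:ℝ)+1) * legendreP m x := by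
  rw [legendreP_eq, legendreP_eq, legendreP_eq]
  have hb := congrArg (fun p : Polynomial ℝ => p.eval x) (legQ_bonnet m)
  simp only [eval_mul, eval_add, eval_sub, eval_pow, eval_X, eval_natCast, eval_ofNat, eval_one] at hb
  have hfac2 : (Nat.factorial (m+2) : ℝ) = ((m:ℝ)+2) * ((m:ℝ)+1) * (Nat.factorial m : ℝ) := by
    rw [Nat.factorial_succ, Nat.factorial_succ]; push_cast; ring
  have hfac1 : (Nat.factorial (m+1) : ℝ) = ((m:ℝ)+1) * (Nat.factorial m : ℝ) := by
    rw [Nat.factorial_succ]; push_cast; ring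
  have h2 : ((2:ℝ)^(m+2)) = 4 * 2^m := by ring
  have h1 : ((2:ℝ)^(m+1)) = 2 * 2^m := by ring
  rw [hb, hfac2, hfac1, h2, h1]
  have hm0 : ((m:ℝ)+1) ≠ 0 := by positivity
  have hm2 : ((m:ℝ)+2) ≠ 0 := by positivity
  have hp : ((2:ℝ)^m) ≠ 0 := by positivity
  have hf : (Nat.factorial m : ℝ) ≠ 0 := by
    exact_mod_cast Nat.cast_ne_zero.mpr (Nat.factorial_ne_zero m)
  field_simp
  ring

section
variable {θ : ℝ} (hθ0 : 0 < θ) (hθπ : θ < π)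

include hθ0 in
lemma s_pos {φ : ℝ} (hφ1 : θ < φ) (hφ2 : φ ≤ π) : 0 < Real.cos θ - Real.cos φ := by
  have := Real.cos_lt_cos_of_nonneg_of_le_pi hθ0.le hφ2 hφ1
  linarith

include hθ0 hθπ in
lemma cos_lb {φ : ℝ} (hφ1 : θ < φ) (hφ2 : φ ≤ π) :
    2 * min (Real.sin θ) (Real.cos (θ/2)) / π * (φ - θ) ≤ Real.cos θ - Real.cos φ := by
  have hpi := Real.pi_pos
  have hexp : Real.cos θ - Real.cos φ
      = 2 * Real.sin ((θ+φ)/2) * Real.sin ((φ-θ)/2) := by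
    rw [Real.cos_sub_cos]
    have e : (θ - φ)/2 = -((φ-θ)/2) := by ring
    rw [e, Real.sin_neg]
    ring
  have h1 : 2/π * ((φ-θ)/2) ≤ Real.sin ((φ-θ)/2) :=
    Real.mul_le_sin (by linarith) (by linarith)
  have h2 : min (Real.sin θ) (Real.cos (θ/2)) ≤ Real.sin ((θ+φ)/2) := by
    rcases le_or_gt ((θ+φ)/2) (π/2) with hc | hc
    · refine le_trans (min_le_left _ _) ?_
      exact Real.sin_le_sin_of_le_of_le_pi_div_two (by linarith) hc (by linarith)
    · refine le_trans (min_le_right _ _) ?_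
      have e : Real.sin ((θ+φ)/2) = Real.sin (π - (θ+φ)/2) := (Real.sin_pi_sub _).symm
      have e2 : Real.cos (θ/2) = Real.sin (π/2 - θ/2) := (Real.sin_pi_div_two_sub _).symm
      rw [e, e2]
      exact Real.sin_le_sin_of_le_of_le_pi_div_two (by linarith) (by linarith) (by linarith)
  have hmin : 0 < min (Real.sin θ) (Real.cos (θ/2)) := by
    apply lt_min
    · exact Real.sin_pos_of_pos_of_lt_pi hθ0 hθπ
    · exact Real.cos_pos_of_mem_Ioo ⟨by linarith, by linarith⟩
  have hs1 : 0 ≤ Real.sin ((φ-θ)/2) := le_trans (mul_nonneg (by positivity) (by linarith)) h1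
  rw [hexp]
  have hprod := mul_le_mul h2 h1 (mul_nonneg (by positivity) (by linarith)) (le_trans hmin.le h2)
  calc 2 * (Real.sin θ ⊓ Real.cos (θ/2)) / π * (φ - θ)
      = 2 * ((Real.sin θ ⊓ Real.cos (θ/2)) * (2/π * ((φ-θ)/2))) := by ring
    _ ≤ 2 * (Real.sin ((θ+φ)/2) * Real.sin ((φ-θ)/2)) :=
        mul_le_mul_of_nonneg_left hprod (by norm_num)
    _ = 2 * Real.sin ((θ+φ)/2) * Real.sin ((φ-θ)/2) := by ring

include hθ0 hθπ in
lemma integrable_kernel (a : ℝ) :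
    IntervalIntegrable (fun φ => Real.sin (a*φ) / Real.sqrt (Real.cos θ - Real.cos φ))
      volume θ π := by
  have hpi := Real.pi_pos
  set c : ℝ := 2 * min (Real.sin θ) (Real.cos (θ/2)) / π with hc
  have hmin : 0 < min (Real.sin θ) (Real.cos (θ/2)) := by
    apply lt_min
    · exact Real.sin_pos_of_pos_of_lt_pi hθ0 hθπ
    · exact Real.cos_pos_of_mem_Ioo ⟨by linarith, by linarith⟩
  have hcpos : 0 < c := by positivity
  have hdom : IntervalIntegrable (fun φ => (Real.sqrt c)⁻¹ * (φ - θ) ^ (-(1/2) : ℝ))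
      volume θ π := by
    have h0 : IntervalIntegrable (fun x : ℝ => x ^ (-(1/2) : ℝ)) volume 0 (π - θ) :=
      intervalIntegral.intervalIntegrable_rpow' (by norm_num)
    have h1 := (h0.comp_sub_right θ).const_mul (Real.sqrt c)⁻¹
    simpa using h1
  rw [intervalIntegrable_iff_integrableOn_Ioc_of_le (by linarith)] at hdom ⊢
  refine MeasureTheory.Integrable.mono hdom ?_ ?_
  · apply Measurable.aestronglyMeasurable
    exact ((Real.continuous_sin.comp (continuous_const.mul continuous_id)).measurable).div
      ((Real.continuous_sqrt.comp (continuous_const.sub Real.continuous_cos)).measurable)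
  · filter_upwards [ae_restrict_mem measurableSet_Ioc] with φ hφ
    obtain ⟨hφ1, hφ2⟩ := hφ
    have hs := s_pos hθ0 hφ1 hφ2
    have hlb := cos_lb hθ0 hθπ hφ1 hφ2
    have hφθ : (0:ℝ) < φ - θ := by linarith
    have hsq1 : Real.sqrt (c * (φ - θ)) ≤ Real.sqrt (Real.cos θ - Real.cos φ) :=
      Real.sqrt_le_sqrt (by linarith)
    have hsq0 : 0 < Real.sqrt (c * (φ - θ)) := Real.sqrt_pos.mpr (by positivity)
    have hsqs : 0 < Real.sqrt (Real.cos θ - Real.cos φ) := Real.sqrt_pos.mpr hs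
    have hrw : (Real.sqrt c)⁻¹ * (φ - θ) ^ (-(1/2) : ℝ)
        = (Real.sqrt (c * (φ-θ)))⁻¹ := by
      rw [Real.sqrt_mul hcpos.le, Real.rpow_neg hφθ.le, ← Real.sqrt_eq_rpow, mul_inv]
    rw [Real.norm_eq_abs, Real.norm_eq_abs, abs_div, hrw,
      abs_of_pos (inv_pos.mpr hsq0), abs_of_pos hsqs]
    calc |Real.sin (a*φ)| / Real.sqrt (Real.cos θ - Real.cos φ)
        ≤ 1 / Real.sqrt (Real.cos θ - Real.cos φ) :=
          div_le_div_of_nonneg_right (Real.abs_sin_le_one _) hsqs.le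

      _ ≤ 1 / Real.sqrt (c * (φ-θ)) := one_div_le_one_div_of_le hsq0 hsq1
      _ = (Real.sqrt (c * (φ-θ)))⁻¹ := one_div _

end

section
variable {θ : ℝ} (hθ0 : 0 < θ) (hθπ : θ < π)

include hθ0 hθπ in
lemma rec_integral (ℓ : ℕ) :
    ∫ φ in θ..π, (((ℓ:ℝ)+1) * Real.sin (((ℓ:ℝ)+1+1/2)*φ) + (ℓ:ℝ) * Real.sin (((ℓ:ℝ)-1/2)*φ)
      - (2*(ℓ:ℝ)+1) * Real.cos θ * Real.sin (((ℓ:ℝ)+1/2)*φ))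
        / Real.sqrt (Real.cos θ - Real.cos φ) = 0 := by
  have hpi := Real.pi_pos
  set G : ℝ → ℝ := fun t => (((ℓ:ℝ)+1) * Real.sin (((ℓ:ℝ)+1+1/2)*t) + (ℓ:ℝ) * Real.sin (((ℓ:ℝ)-1/2)*t)
      - (2*(ℓ:ℝ)+1) * Real.cos θ * Real.sin (((ℓ:ℝ)+1/2)*t))
        / Real.sqrt (Real.cos θ - Real.cos t) with hG
  set F : ℝ → ℝ := fun t => 2 * Real.cos (((ℓ:ℝ)+1/2)*t) * Real.sqrt (Real.cos θ - Real.cos t) with hF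
  have hint : IntervalIntegrable G volume θ π := by
    have e : G = fun t => (((ℓ:ℝ)+1) * (Real.sin (((ℓ:ℝ)+1+1/2)*t) / Real.sqrt (Real.cos θ - Real.cos t))
        + ((ℓ:ℝ) * (Real.sin (((ℓ:ℝ)-1/2)*t) / Real.sqrt (Real.cos θ - Real.cos t))
        - (2*(ℓ:ℝ)+1) * Real.cos θ * (Real.sin (((ℓ:ℝ)+1/2)*t) / Real.sqrt (Real.cos θ - Real.cos t)))) := by
      funext t; rw [hG]; ring
    rw [e]
    exact (((integrable_kernel hθ0 hθπ _).const_mul _).add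
      (((integrable_kernel hθ0 hθπ _).const_mul _).sub
        ((integrable_kernel hθ0 hθπ _).const_mul _)))
  have hderiv : ∀ x ∈ Ioo θ π, HasDerivWithinAt F (G x) (Ioi x) x := by
    intro x hx
    obtain ⟨hx1, hx2⟩ := hx
    have hs := s_pos hθ0 hx1 hx2.le
    have hsq : 0 < Real.sqrt (Real.cos θ - Real.cos x) := Real.sqrt_pos.mpr hs
    have hss : Real.sqrt (Real.cos θ - Real.cos x) * Real.sqrt (Real.cos θ - Real.cos x)
        = Real.cos θ - Real.cos x := Real.mul_self_sqrt hs.le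
    have hin : HasDerivAt (fun t : ℝ => Real.cos θ - Real.cos t) (Real.sin x) x := by
      simpa using (Real.hasDerivAt_cos x).const_sub (Real.cos θ)
    have hsqrt : HasDerivAt (fun t : ℝ => Real.sqrt (Real.cos θ - Real.cos t))
        (1 / (2 * Real.sqrt (Real.cos θ - Real.cos x)) * Real.sin x) x :=
      (Real.hasDerivAt_sqrt hs.ne').comp x hin
    have hcosμ : HasDerivAt (fun t : ℝ => 2 * Real.cos (((ℓ:ℝ)+1/2)*t))
        (2 * (-Real.sin (((ℓ:ℝ)+1/2)*x) * ((ℓ:ℝ)+1/2))) x := by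
      have h1 : HasDerivAt (fun t : ℝ => ((ℓ:ℝ)+1/2)*t) ((ℓ:ℝ)+1/2) x := by
        simpa using (hasDerivAt_id x).const_mul ((ℓ:ℝ)+1/2)
      exact ((Real.hasDerivAt_cos (((ℓ:ℝ)+1/2)*x)).comp x h1).const_mul 2
    have hF' := hcosμ.mul hsqrt
    have hval : 2 * (-Real.sin (((ℓ:ℝ)+1/2)*x) * ((ℓ:ℝ)+1/2)) * Real.sqrt (Real.cos θ - Real.cos x)
        + (2 * Real.cos (((ℓ:ℝ)+1/2)*x)) * (1 / (2 * Real.sqrt (Real.cos θ - Real.cos x)) * Real.sin x)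
        = G x := by
      rw [hG]
      beta_reduce
      have e1 : ((ℓ:ℝ)+1+1/2)*x = ((ℓ:ℝ)+1/2)*x + x := by ring
      have e2 : ((ℓ:ℝ)-1/2)*x = ((ℓ:ℝ)+1/2)*x - x := by ring
      rw [e1, e2, Real.sin_add, Real.sin_sub, eq_div_iff hsq.ne']
      set A := Real.sqrt (Real.cos θ - Real.cos x) with hA
      set s1 := Real.sin (((ℓ:ℝ)+1/2)*x) with hs1
      set c1 := Real.cos (((ℓ:ℝ)+1/2)*x) with hc1
      field_simp
      linear_combination (-(2*(ℓ:ℝ)+1) * s1) * hss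
    exact hval ▸ hF'.hasDerivWithinAt
  have hcont : ContinuousOn F (Icc θ π) :=
    (((continuous_const.mul (Real.continuous_cos.comp (continuous_const.mul continuous_id))).mul
      (Real.continuous_sqrt.comp (continuous_const.sub Real.continuous_cos)))).continuousOn
  have hFθ : F θ = 0 := by rw [hF]; simp
  have hFπ : F π = 0 := by
    rw [hF]
    have e : ((ℓ:ℝ)+1/2) * π = (ℓ:ℝ)*π + π/2 := by ring
    simp only [e, Real.cos_add_pi_div_two, Real.sin_nat_mul_pi]
    ring
  have hmain := intervalIntegral.integral_eq_sub_of_hasDeriv_right_of_le (by linarith)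
    hcont hderiv hint
  rw [hFθ, hFπ] at hmain
  simpa using hmain

end

lemma base_integral {θ : ℝ} (hθ0 : 0 < θ) (hθπ : θ < π) :
    ∫ φ in θ..π, Real.sin ((1/2:ℝ)*φ) / Real.sqrt (Real.cos θ - Real.cos φ)
      = Real.sqrt 2 * π / 2 := by
  have hpi := Real.pi_pos
  have ha : 0 < Real.cos (θ/2) :=
    Real.cos_pos_of_mem_Ioo ⟨by linarith, by linarith⟩
  set a : ℝ := Real.cos (θ/2) with haa
  set F : ℝ → ℝ := fun t => Real.sqrt 2 * Real.arccos (Real.cos (t/2) / a) with hF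
  have hcont : ContinuousOn F (Icc θ π) := by
    apply Continuous.continuousOn
    exact continuous_const.mul (Real.continuous_arccos.comp
      ((Real.continuous_cos.comp (continuous_id.div_const 2)).div_const a))
  have hderiv : ∀ x ∈ Ioo θ π, HasDerivWithinAt F
      (Real.sin ((1/2:ℝ)*x) / Real.sqrt (Real.cos θ - Real.cos x)) (Ioi x) x := by
    intro x hx
    obtain ⟨hx1, hx2⟩ := hx
    have hs := s_pos hθ0 hx1 hx2.le
    have hsq : 0 < Real.sqrt (Real.cos θ - Real.cos x) := Real.sqrt_pos.mpr hs
    have hcx : 0 < Real.cos (x/2) :=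
      Real.cos_pos_of_mem_Ioo ⟨by linarith, by linarith⟩
    have hlt : Real.cos (x/2) < a := by
      rw [haa]
      exact Real.cos_lt_cos_of_nonneg_of_le_pi (by linarith) (by linarith) (by linarith)
    have hu1 : Real.cos (x/2) / a < 1 := (div_lt_one ha).mpr hlt
    have hu0 : 0 < Real.cos (x/2) / a := div_pos hcx ha
    have hhalf : HasDerivAt (fun t : ℝ => t/2) (1/2 : ℝ) x := by
      simpa using (hasDerivAt_id x).div_const 2
    have hcoshalf : HasDerivAt (fun t : ℝ => Real.cos (t/2)) (-Real.sin (x/2) * (1/2)) x :=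
      by have := (Real.hasDerivAt_cos (x/2)).comp x hhalf; exact this
    have hinner : HasDerivAt (fun t : ℝ => Real.cos (t/2) / a) (-Real.sin (x/2) * (1/2) / a) x :=
      hcoshalf.div_const a
    have harc := ((Real.hasDerivAt_arccos (by linarith) (ne_of_lt hu1)).comp x hinner).const_mul
      (Real.sqrt 2)
    have hval : Real.sqrt 2 * (-(1 / Real.sqrt (1 - (Real.cos (x/2) / a)^2)) *
        (-Real.sin (x/2) * (1/2) / a))
        = Real.sin ((1/2:ℝ)*x) / Real.sqrt (Real.cos θ - Real.cos x) := by
      have eθ : 2*(θ/2) = θ := by ring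
      have ex : 2*(x/2) = x := by ring
      have hsqhalfθ : a^2 = 1/2 + Real.cos θ / 2 := by rw [haa, Real.cos_sq, eθ]
      have hsqhalfx : Real.cos (x/2)^2 = 1/2 + Real.cos x / 2 := by
        rw [Real.cos_sq, ex]
      have h1u : 1 - (Real.cos (x/2) / a)^2 = (Real.cos θ - Real.cos x) / (2*a^2) := by
        field_simp
        rw [hsqhalfθ, hsqhalfx]
        ring
      have hsqrt1u : Real.sqrt (1 - (Real.cos (x/2) / a)^2)
          = Real.sqrt (Real.cos θ - Real.cos x) / (Real.sqrt 2 * a) := by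
        rw [h1u, Real.sqrt_div hs.le, Real.sqrt_mul (by norm_num : (0:ℝ) ≤ 2),
          Real.sqrt_sq ha.le]
      rw [hsqrt1u]
      have e : (1/2:ℝ)*x = x/2 := by ring
      rw [e]
      have h2 : Real.sqrt 2 * Real.sqrt 2 = 2 := Real.mul_self_sqrt (by norm_num)
      have hsqrt2 : (0:ℝ) < Real.sqrt 2 := Real.sqrt_pos.mpr (by norm_num)
      field_simp
      linear_combination (Real.sin (x/2)) * h2
    exact hval ▸ harc.hasDerivWithinAt
  have hint := integrable_kernel hθ0 hθπ (1/2 : ℝ)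
  have hmain := intervalIntegral.integral_eq_sub_of_hasDeriv_right_of_le (le_of_lt hθπ)
    hcont hderiv hint
  have hFθ : F θ = 0 := by
    rw [hF]
    beta_reduce
    rw [div_self ha.ne', Real.arccos_one, mul_zero]
  have hFπ : F π = Real.sqrt 2 * (π/2) := by
    rw [hF]
    beta_reduce
    rw [Real.cos_pi_div_two, zero_div, Real.arccos_zero]
  rw [hmain, hFθ, hFπ]
  ring

lemma split3 {θ : ℝ} (hθ0 : 0 < θ) (hθπ : θ < π) (c1 c2 c3 a1 a2 a3 : ℝ) :
    ∫ φ in θ..π, (c1 * Real.sin (a1*φ) + c2 * Real.sin (a2*φ) - c3 * Real.sin (a3*φ))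
        / Real.sqrt (Real.cos θ - Real.cos φ)
      = c1 * (∫ φ in θ..π, Real.sin (a1*φ) / Real.sqrt (Real.cos θ - Real.cos φ))
        + c2 * (∫ φ in θ..π, Real.sin (a2*φ) / Real.sqrt (Real.cos θ - Real.cos φ))
        - c3 * (∫ φ in θ..π, Real.sin (a3*φ) / Real.sqrt (Real.cos θ - Real.cos φ)) := by
  have h1 := (integrable_kernel hθ0 hθπ a1).const_mul c1
  have h2 := (integrable_kernel hθ0 hθπ a2).const_mul c2
  have h3 := (integrable_kernel hθ0 hθπ a3).const_mul c3
  have e : (fun φ => (c1 * Real.sin (a1*φ) + c2 * Real.sin (a2*φ) - c3 * Real.sin (a3*φ))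
        / Real.sqrt (Real.cos θ - Real.cos φ))
      = fun φ => c1 * (Real.sin (a1*φ) / Real.sqrt (Real.cos θ - Real.cos φ))
        + (c2 * (Real.sin (a2*φ) / Real.sqrt (Real.cos θ - Real.cos φ))
          - c3 * (Real.sin (a3*φ) / Real.sqrt (Real.cos θ - Real.cos φ))) := by
    funext φ; ring
  rw [e, intervalIntegral.integral_add h1 (h2.sub h3), intervalIntegral.integral_sub h2 h3,
    intervalIntegral.integral_const_mul, intervalIntegral.integral_const_mul,
    intervalIntegral.integral_const_mul]
  ring


/-- The Mehler–Dirichlet formula for Legendre polynomials. -/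
theorem mehler_dirichlet (ℓ : ℕ) (θ : ℝ) (hθ : θ ∈ Set.Ioo 0 π) :
    legendreP ℓ (Real.cos θ) =
      (Real.sqrt 2 / π) *
        ∫ φ in θ..π,
          Real.sin (((ℓ : ℝ) + 1 / 2) * φ) / Real.sqrt (Real.cos θ - Real.cos φ) := by
  obtain ⟨hθ0, hθπ⟩ := hθ
  have hpi := Real.pi_pos
  have h2 : Real.sqrt 2 * Real.sqrt 2 = 2 := Real.mul_self_sqrt (by norm_num)
  have main : ∀ k : ℕ,
      (legendreP k (Real.cos θ) = (Real.sqrt 2 / π) *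
        ∫ φ in θ..π, Real.sin (((k:ℝ) + 1/2) * φ) / Real.sqrt (Real.cos θ - Real.cos φ)) ∧
      (legendreP (k+1) (Real.cos θ) = (Real.sqrt 2 / π) *
        ∫ φ in θ..π, Real.sin (((((k+1:ℕ)):ℝ) + 1/2) * φ) / Real.sqrt (Real.cos θ - Real.cos φ)) := by
    intro k
    induction k with
    | zero =>
        constructor
        · rw [legendreP_zero]
          have e0 : (((0:ℕ):ℝ) + 1/2) = (1/2 : ℝ) := by norm_num
          rw [e0, base_integral hθ0 hθπ]
          field_simp
          linear_combination (-1) * h2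
        · rw [legendreP_one]
          have h := rec_integral hθ0 hθπ 0
          rw [split3 hθ0 hθπ] at h
          have e1 : (((0:ℕ):ℝ)+1+1/2) = (((0+1:ℕ)):ℝ) + 1/2 := by norm_num
          have e2 : (((0:ℕ):ℝ)+1/2) = (1/2:ℝ) := by norm_num
          rw [e1, e2, base_integral hθ0 hθπ] at h
          have e3 : ((0:ℕ):ℝ) = 0 := by norm_num
          rw [e3] at h
          have hI : (∫ φ in θ..π, Real.sin ((((0+1:ℕ):ℝ) + 1/2) * φ) / Real.sqrt (Real.cos θ - Real.cos φ))
              = Real.cos θ * (Real.sqrt 2 * π / 2) := by linarith [h]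
          rw [hI]
          field_simp
          linear_combination (-(Real.cos θ)) * h2
    | succ n ih =>
        refine ⟨ih.2, ?_⟩
        show legendreP (n+2) (Real.cos θ) = (Real.sqrt 2 / π) *
          ∫ φ in θ..π, Real.sin (((((n+1+1:ℕ)):ℝ) + 1/2) * φ) / Real.sqrt (Real.cos θ - Real.cos φ)
        have h := rec_integral hθ0 hθπ (n+1)
        rw [split3 hθ0 hθπ] at h
        have e1 : (((n+1:ℕ):ℝ)+1+1/2) = (((n+1+1:ℕ)):ℝ) + 1/2 := by push_cast; ring
        have e2 : (((n+1:ℕ):ℝ)-1/2) = ((n:ℕ):ℝ) + 1/2 := by push_cast; ring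
        rw [e1, e2] at h
        set A0 : ℝ := ∫ φ in θ..π, Real.sin (((n:ℝ) + 1/2) * φ) / Real.sqrt (Real.cos θ - Real.cos φ) with hA0
        set A1 : ℝ := ∫ φ in θ..π, Real.sin ((((n+1:ℕ):ℝ) + 1/2) * φ) / Real.sqrt (Real.cos θ - Real.cos φ) with hA1
        set A2 : ℝ := ∫ φ in θ..π, Real.sin ((((n+1+1:ℕ):ℝ) + 1/2) * φ) / Real.sqrt (Real.cos θ - Real.cos φ) with hA2
        have hb := legendreP_bonnet n (Real.cos θ)
        rw [ih.1, ih.2] at hb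
        have hn2 : ((n:ℝ)+2) ≠ 0 := by positivity
        apply mul_left_cancel₀ hn2
        rw [hb]
        push_cast at h ⊢
        linear_combination (-(Real.sqrt 2) / π) * h
  exact (main ℓ).1
end
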